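/- Let (Γ, τ) be a translation quiver such that whenever there is an arrow x → y and y is projective, x is also projective. Suppose x_0 → x_1 → ⋯ → x_m is a sectional path in Γ, let k_s be the number of arrows from x_{s−1} to x_s, and suppose τ^m(x_m) is defined. Then τ^s(x_s) is defined for s = 0, 1, …, m, there is a sectional path τ^m(x_m) → τ^{m−1}(x_{m−1}) → ⋯ → τ(x_1) → x_0 in Γ, and for each s the number of arrows from τ^s(x_s) to τ^{s−1}(x_{s−1}) equals k_s. -/
import Mathlib


/-- A quiver (given by its arrow types `A x y`) is locally finite if each
vertex has only finitely many arrows between any pair of vertices and only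
finitely many neighbours. -/
def QuiverLocFin {V : Type*} (A : V → V → Type*) : Prop :=
  (∀ x y, Finite (A x y)) ∧ (∀ x, {y | Nonempty (A x y)}.Finite) ∧
    (∀ y, {x | Nonempty (A x y)}.Finite)

/-- The partially defined translation `τ : V → Option V` is injective on its
domain. -/
def TauInjective {V : Type*} (τ : V → Option V) : Prop :=
  ∀ x y z, τ x = some z → τ y = some z → x = y

/-- A translation quiver: a locally finite quiver together with an injective
partially defined translation `τ` such that for every vertex `x` and every
vertex `y` in the domain of `τ`, the number of arrows from `x` to `y` equals
the number of arrows from `τ(y)` to `x`.  The projective vertices are those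
outside the domain of `τ` (i.e. those with `τ y = none`). -/
def IsTranslationQuiver {V : Type*} (A : V → V → Type*) (τ : V → Option V) : Prop :=
  QuiverLocFin A ∧ TauInjective τ ∧
    ∀ x y z, τ y = some z → Nat.card (A x y) = Nat.card (A z x)

/-- The `k`-th iterate of the partially defined map `τ`. -/
def iterTau {V : Type*} (τ : V → Option V) : ℕ → V → Option V
  | 0, x => some x
  | k+1, x => (τ x).bind (iterTau τ k)

/-- The sectional condition on a sequence of vertices `v 0, v 1, …, v m`:
`τ (v (s+1)) ≠ v (s-1)` for all `0 < s < m` for which `τ (v (s+1))` is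
defined. -/
def SectCond {V : Type*} (τ : V → Option V) (m : ℕ) (v : Fin (m+1) → V) : Prop :=
  ∀ (s : ℕ) (_ : 1 ≤ s) (h2 : s + 1 ≤ m),
    τ (v ⟨s+1, by omega⟩) ≠ some (v ⟨s-1, by omega⟩)

/-- `v 0, v 1, …, v m` is (the sequence of vertices of) a sectional path:
there is an arrow `v s → v (s+1)` for each `s`, and the sectional condition
holds. -/
def IsSectionalPath {V : Type*} (A : V → V → Type*) (τ : V → Option V) (m : ℕ)
    (v : Fin (m+1) → V) : Prop :=
  (∀ s : Fin m, Nonempty (A (v s.castSucc) (v s.succ))) ∧ SectCond τ m v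

/-- The type of sectional paths of length `m` from `x` to `y`: a sequence of
vertices `v 0 = x, v 1, …, v m = y` satisfying the sectional condition,
together with a chosen arrow `v s → v (s+1)` for each `s`. -/
def SectPath {V : Type*} (A : V → V → Type*) (τ : V → Option V) (m : ℕ)
    (x y : V) : Type _ :=
  Σ v : {v : Fin (m+1) → V // v 0 = x ∧ v (Fin.last m) = y ∧ SectCond τ m v},
    ∀ s : Fin m, A (v.1 s.castSucc) (v.1 s.succ)

section
variable {V : Type*}

lemma iterTau_zero (τ : V → Option V) (x : V) : iterTau τ 0 x = some x := rfl

lemma iterTau_succ (τ : V → Option V) (n : ℕ) (x : V) :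
    iterTau τ (n+1) x = (τ x).bind (iterTau τ n) := rfl

lemma iterTau_one (τ : V → Option V) (x : V) : iterTau τ 1 x = τ x := by
  cases h : τ x <;> simp [iterTau_succ, h, iterTau_zero]

lemma iterTau_succ' (τ : V → Option V) : ∀ (n : ℕ) (x : V),
    iterTau τ (n+1) x = (iterTau τ n x).bind τ := by
  intro n
  induction n with
  | zero => intro x; cases h : τ x <;> simp [iterTau_succ, iterTau_zero, h]
  | succ k ih =>
    intro x
    rw [iterTau_succ, iterTau_succ]
    cases h : τ x with
    | none => simp
    | some u => simpa using ih u

/-- counts are preserved and nonemptiness transfers -/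
lemma card_ne {A : V → V → Type*} (hfin : ∀ x y, Finite (A x y)) {x y z w : V}
    (h : Nat.card (A x y) = Nat.card (A z w)) (hne : Nonempty (A z w)) :
    Nonempty (A x y) := by
  have hpos : 0 < Nat.card (A z w) := Nat.card_pos_iff.mpr ⟨hne, hfin z w⟩
  rw [← h] at hpos
  exact (Nat.card_pos_iff.mp hpos).1

/-- Lemma B: translating a whole sectional path one step. -/
lemma lemB (A : V → V → Type*) (τ : V → Option V)
    (hTQ : IsTranslationQuiver A τ)
    (hproj : ∀ x y, Nonempty (A x y) → τ y = none → τ x = none)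
    (n : ℕ) (y : ℕ → V)
    (harr : ∀ s, s < n → Nonempty (A (y s) (y (s+1))))
    (hsect : ∀ s, s + 2 ≤ n → τ (y (s+2)) ≠ some (y s))
    (h0 : (τ (y 0)).isSome) :
    ∃ t : ℕ → V, (∀ s, s ≤ n → τ (y s) = some (t s)) ∧
      (∀ s, s < n → Nonempty (A (t s) (t (s+1)))) ∧
      (∀ s, s + 2 ≤ n → τ (t (s+2)) ≠ some (t s)) ∧
      (∀ s, s < n → Nat.card (A (t s) (t (s+1))) = Nat.card (A (y s) (y (s+1)))) := by
  obtain ⟨⟨hfin, -, -⟩, hinj, hrule⟩ := hTQ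
  have hdef : ∀ s, s ≤ n → (τ (y s)).isSome := by
    intro s
    induction s with
    | zero => intro _; exact h0
    | succ k ih =>
      intro hk
      by_contra hc
      have hnone : τ (y (k+1)) = none := Option.not_isSome_iff_eq_none.mp hc
      have h2 := ih (by omega)
      rw [hproj _ _ (harr k (by omega)) hnone] at h2
      simp at h2
  refine ⟨fun s => (τ (y s)).getD (y 0), ?_, ?_, ?_, ?_⟩
  · intro s hs
    have h1 := hdef s hs
    cases h : τ (y s) with
    | none => rw [h] at h1; simp at h1
    | some z => simp [h]
  · intro s hs
    have h1 := hdef s (by omega)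
    have h2 := hdef (s+1) (by omega)
    cases hx : τ (y s) with
    | none => rw [hx] at h1; simp at h1
    | some a =>
      cases hy : τ (y (s+1)) with
      | none => rw [hy] at h2; simp at h2
      | some b =>
        simp only [hx, hy, Option.getD_some]
        have e1 : Nat.card (A (y s) (y (s+1))) = Nat.card (A b (y s)) := hrule _ _ _ hy
        have e2 : Nat.card (A b (y s)) = Nat.card (A a b) := hrule _ _ _ hx
        exact card_ne hfin (e1.trans e2).symm (harr s hs)
  · intro s hs heq
    have h1 := hdef s (by omega)
    have h2 := hdef (s+2) (by omega)
    cases hx : τ (y s) with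
    | none => rw [hx] at h1; simp at h1
    | some a =>
      cases hy : τ (y (s+2)) with
      | none => rw [hy] at h2; simp at h2
      | some b =>
        simp only [hx, hy, Option.getD_some] at heq
        have hb : b = y s := hinj _ _ _ heq hx
        exact hsect s hs (by rw [hy, hb])
  · intro s hs
    have h1 := hdef s (by omega)
    have h2 := hdef (s+1) (by omega)
    cases hx : τ (y s) with
    | none => rw [hx] at h1; simp at h1
    | some a =>
      cases hy : τ (y (s+1)) with
      | none => rw [hy] at h2; simp at h2
      | some b =>
        simp only [hx, hy, Option.getD_some]
        have e1 : Nat.card (A (y s) (y (s+1))) = Nat.card (A b (y s)) := hrule _ _ _ hy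
        have e2 : Nat.card (A b (y s)) = Nat.card (A a b) := hrule _ _ _ hx
        exact (e1.trans e2).symm

end

section
variable {V : Type*}

lemma core (A : V → V → Type*) (τ : V → Option V)
    (hTQ : IsTranslationQuiver A τ)
    (hproj : ∀ x y, Nonempty (A x y) → τ y = none → τ x = none) :
    ∀ (m : ℕ) (v : ℕ → V),
    (∀ s, s < m → Nonempty (A (v s) (v (s+1)))) →
    (∀ s, s + 2 ≤ m → τ (v (s+2)) ≠ some (v s)) →
    (iterTau τ m (v m)).isSome →
    ∃ w : ℕ → V,
      (∀ s, s ≤ m → iterTau τ s (v s) = some (w s)) ∧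
      (∀ s, s < m → Nonempty (A (w (s+1)) (w s))) ∧
      (∀ s, s + 2 ≤ m → τ (w s) ≠ some (w (s+2))) ∧
      (∀ s, s < m → Nat.card (A (w (s+1)) (w s)) = Nat.card (A (v s) (v (s+1)))) := by
  intro m
  induction m with
  | zero =>
    intro v _ _ _
    exact ⟨v, by intro s hs; interval_cases s; rfl,
      by intro s hs; omega, by intro s hs; omega, by intro s hs; omega⟩
  | succ m ih =>
    intro v harr hsect hdefn
    have hfin := hTQ.1.1
    have hinj := hTQ.2.1
    have hrule := hTQ.2.2
    -- the shifted subpath v' s = v (s+1)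
    obtain ⟨w', hw', w'arr, w'sect, w'card⟩ :=
      ih (fun s => v (s+1)) (fun s hs => harr (s+1) (by omega))
        (fun s hs => hsect (s+1) (by omega))
        (by
          rw [iterTau_succ'] at hdefn
          cases h : iterTau τ m (v (m+1)) with
          | none => rw [h] at hdefn; simp at hdefn
          | some u => simp)
    -- τ (w' m) is defined
    have hwm : iterTau τ m (v (m+1)) = some (w' m) := hw' m (le_refl m)
    have htw : (τ (w' m)).isSome := by
      rw [iterTau_succ', hwm] at hdefn
      simpa using hdefn
    -- apply lemB to the reversed path  y s = w' (m - s)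
    obtain ⟨t, ht, tarr, tsect, tcard⟩ :=
      lemB A τ hTQ hproj m (fun s => w' (m - s))
        (by
          intro s hs
          have := w'arr (m - s - 1) (by omega)
          show Nonempty (A (w' (m - s)) (w' (m - (s+1))))
          rw [show m - s = (m - s - 1) + 1 by omega,
            show m - (s+1) = m - s - 1 by omega]
          exact this)
        (by
          intro s hs heq
          have heq' : τ (w' (m - (s+2))) = some (w' (m - s)) := heq
          rw [show m - (s + 2) = m - s - 2 by omega,
            show m - s = (m - s - 2) + 2 by omega] at heq'
          exact w'sect (m - s - 2) (by omega) heq')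
        (by simpa using htw)
    -- the answer
    -- key: τ (w' k) = some (t (m - k)) for k ≤ m
    have hkey : ∀ k, k ≤ m → τ (w' k) = some (t (m - k)) := by
      intro k hk
      have h1 := ht (m - k) (by omega)
      rw [show m - (m - k) = k by omega] at h1
      exact h1
    refine ⟨fun s => match s with | 0 => v 0 | k+1 => t (m - k), ?_, ?_, ?_, ?_⟩
    · -- iterTau clause
      intro s hs
      match s with
      | 0 => rfl
      | k+1 =>
        rw [iterTau_succ', hw' k (by omega), Option.bind_some, hkey k (by omega)]
    · -- arrows
      intro s hs
      match s with
      | 0 =>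
        have hv1 : w' 0 = v 1 := by
          have := hw' 0 (by omega)
          rw [iterTau_zero] at this
          exact (Option.some_inj.mp this).symm
        have h1 : τ (v 1) = some (t m) := by
          have := hkey 0 (by omega)
          rw [hv1, Nat.sub_zero] at this
          exact this
        have := hrule (v 0) (v 1) (t m) h1
        exact card_ne hfin this.symm (harr 0 (by omega))
      | k+1 =>
        have := tarr (m - k - 1) (by omega)
        rw [show m - k - 1 + 1 = m - k by omega] at this
        show Nonempty (A (t (m - (k+1))) (t (m - k)))
        rw [show m - (k+1) = m - k - 1 by omega]
        exact this
    · -- sectional condition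
      intro s hs
      match s with
      | 0 =>
        intro heq
        -- heq : τ (v 0) = some (t (m - 1))
        have h1 : τ (w' 1) = some (t (m - 1)) := hkey 1 (by omega)
        have hb : v 0 = w' 1 := hinj _ _ _ heq h1
        have h2 : τ (v 2) = some (w' 1) := by
          have := hw' 1 (by omega)
          rwa [iterTau_one] at this
        exact hsect 0 (by omega) (by rw [h2, ← hb])
      | k+1 =>
        intro heq
        have := tsect (m - k - 2) (by omega)
        rw [show m - k - 2 + 2 = m - k by omega] at this
        have heq' : τ (t (m - k)) = some (t (m - (k + 2))) := heq
        rw [show m - (k + 2) = m - k - 2 by omega] at heq'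
        exact this heq'
    · -- counts
      intro s hs
      match s with
      | 0 =>
        have hv1 : w' 0 = v 1 := by
          have := hw' 0 (by omega)
          rw [iterTau_zero] at this
          exact (Option.some_inj.mp this).symm
        have h1 : τ (v 1) = some (t m) := by
          have := hkey 0 (by omega)
          rw [hv1, Nat.sub_zero] at this
          exact this
        exact (hrule (v 0) (v 1) (t m) h1).symm
      | k+1 =>
        have h1 := tcard (m - k - 1) (by omega)
        rw [show m - k - 1 + 1 = m - k by omega] at h1
        rw [show m - (m - k) = k by omega, show m - (m - k - 1) = k + 1 by omega] at h1
        -- h1 : card (A (t (m-k-1)) (t (m-k))) = card (A (w' (k+1)) (w' k))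
        have h2 := w'card k (by omega)
        show Nat.card (A (t (m - (k+1))) (t (m - k))) = Nat.card (A (v (k+1)) (v (k+1+1)))
        rw [show m - (k+1) = m - k - 1 by omega]
        exact h1.trans h2
end


theorem stmt6aux
 {V : Type*} (A : V → V → Type*) (τ : V → Option V)
    (hTQ : IsTranslationQuiver A τ)
    (hproj : ∀ x y, Nonempty (A x y) → τ y = none → τ x = none)
    (m : ℕ) (v : Fin (m+1) → V) (hv : IsSectionalPath A τ m v)
    (hdef : ∃ z, iterTau τ m (v (Fin.last m)) = some z) :
    ∃ w : Fin (m+1) → V,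
      (∀ s : Fin (m+1), iterTau τ s.val (v s) = some (w s)) ∧
      (∀ s : Fin m, Nonempty (A ((fun s => w (Fin.rev s)) (Fin.castSucc s)) ((fun s => w (Fin.rev s)) (Fin.succ s)))) ∧
      (∀ (s : ℕ) (_ : 1 ≤ s) (h2 : s + 1 ≤ m),
        τ ((fun s => w (Fin.rev s)) ⟨s+1, by omega⟩) ≠ some ((fun s => w (Fin.rev s)) ⟨s-1, by omega⟩)) ∧
      ∀ s : Fin m, Nat.card (A (w (Fin.succ s)) (w (Fin.castSucc s)))
        = Nat.card (A (v (Fin.castSucc s)) (v (Fin.succ s))) := by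
  obtain ⟨harrF, hsectF⟩ := hv
  have hsome : ∀ (a b : ℕ) (ha : a < m+1) (hb : b < m+1), a = b →
      v ⟨a, ha⟩ = v ⟨b, hb⟩ := by
    intro a b ha hb h; subst h; rfl
  let vN : ℕ → V := fun s => if h : s < m+1 then v ⟨s, h⟩ else v 0
  have vN_eq : ∀ (s : ℕ) (h : s < m+1), vN s = v ⟨s, h⟩ := fun s h => dif_pos h
  obtain ⟨w, hwdef, hwarr, hwsect, hwcard⟩ :=
    core A τ hTQ hproj m vN
      (by
        intro s hs
        have := harrF ⟨s, hs⟩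
        rw [vN_eq s (by omega), vN_eq (s+1) (by omega)]
        exact this)
      (by
        intro s hs heq
        refine hsectF (s+1) (by omega) (by omega) ?_
        rw [vN_eq (s+2) (by omega), vN_eq s (by omega)] at heq
        rw [hsome (s+1+1) (s+2) (by omega) (by omega) (by omega),
          hsome (s+1-1) s (by omega) (by omega) (by omega)]
        exact heq)
      (by
        obtain ⟨z, hz⟩ := hdef
        rw [vN_eq m (by omega)]
        have : v ⟨m, by omega⟩ = v (Fin.last m) := hsome m m _ _ rfl
        rw [this, hz]; simp)
  refine ⟨fun s => w s.val, ?_, ?_, ?_, ?_⟩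
  · intro s
    have := hwdef s.val (Nat.lt_succ_iff.mp s.isLt)
    rwa [vN_eq s.val s.isLt] at this
  · intro s
    have hslt := s.isLt
    have := hwarr (m - s.val - 1) (by omega)
    show Nonempty (A (w ((Fin.castSucc s).rev.val)) (w ((Fin.succ s).rev.val)))
    rw [show ((Fin.castSucc s).rev.val) = m - s.val - 1 + 1 by
        rw [Fin.val_rev, Fin.coe_castSucc]; omega,
      show ((Fin.succ s).rev.val) = m - s.val - 1 by
        rw [Fin.val_rev, Fin.val_succ]; omega]
    exact this
  · intro s h1 h2 heq
    have := hwsect (m - s - 1) (by omega)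
    have heq' : τ (w ((⟨s+1, by omega⟩ : Fin (m+1)).rev.val))
        = some (w ((⟨s-1, by omega⟩ : Fin (m+1)).rev.val)) := heq
    rw [show ((⟨s+1, by omega⟩ : Fin (m+1)).rev.val) = m - s - 1 by
        rw [Fin.val_rev]; show m + 1 - (s + 1 + 1) = m - s - 1; omega,
      show ((⟨s-1, by omega⟩ : Fin (m+1)).rev.val) = m - s - 1 + 2 by
        rw [Fin.val_rev]; show m + 1 - (s - 1 + 1) = m - s - 1 + 2; omega] at heq'
    exact this heq'
  · intro s
    have hslt := s.isLt
    have h1 := hwcard s.val hslt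
    rw [vN_eq s.val (by omega), vN_eq (s.val+1) (by omega)] at h1
    show Nat.card (A (w (Fin.succ s).val) (w (Fin.castSucc s).val)) = _
    rw [Fin.val_succ, Fin.coe_castSucc]
    exact h1


/-- Let `(Γ,τ)` be a translation quiver such that whenever there is an arrow
`x → y` with `y` projective, `x` is projective.  If `v 0 → v 1 → ⋯ → v m` is a
sectional path and `τ^m (v m)` is defined, then `τ^s (v s)` is defined for all
`s` (say `τ^s (v s) = w s`), the reversed sequence
`τ^m (v m) → τ^{m-1} (v (m-1)) → ⋯ → τ (v 1) → v 0` is a sectional path, and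
for each `s` the number of arrows from `τ^{s+1} (v (s+1))` to `τ^s (v s)`
equals the number `k_{s+1}` of arrows from `v s` to `v (s+1)`. -/
theorem stmt6 {V : Type*} (A : V → V → Type*) (τ : V → Option V)
    (hTQ : IsTranslationQuiver A τ)
    (hproj : ∀ x y, Nonempty (A x y) → τ y = none → τ x = none)
    (m : ℕ) (v : Fin (m+1) → V) (hv : IsSectionalPath A τ m v)
    (hdef : ∃ z, iterTau τ m (v (Fin.last m)) = some z) :
    ∃ w : Fin (m+1) → V,
      (∀ s : Fin (m+1), iterTau τ s.val (v s) = some (w s)) ∧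
      IsSectionalPath A τ m (fun s => w s.rev) ∧
      ∀ s : Fin m, Nat.card (A (w s.succ) (w s.castSucc))
        = Nat.card (A (v s.castSucc) (v s.succ)) := by
  obtain ⟨w, h1, h2, h3, h4⟩ := stmt6aux A τ hTQ hproj m v hv hdef
  exact ⟨w, h1, ⟨h2, h3⟩, h4⟩
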